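/- Let H be a finite simple graph with a Z2-action (generator s) which is the edge-disjoint union of two s-invariant spanning trees with no edge fixed by s. Let G be obtained from H by a (Z2,θ) 0-extension: add two new vertices v, sv (swapped by s) and edges vv1, vv2, s(vv1), s(vv2) for distinct v1, v2 ∈ V(H). Then G is the edge-disjoint union of two s-invariant spanning trees and no edge of G is fixed by s. -/

import Mathlib

open SimpleGraph in

private lemma aux_no_cycle_at {V : Type*} {G : SimpleGraph V} {u w : V}
    (hu : ∀ a, G.Adj u a → a = w) : ∀ (c : G.Walk u u), ¬ c.IsCycle := by
  intro c hc
  cases c with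
  | nil => exact SimpleGraph.Walk.IsCycle.not_of_nil hc
  | @cons _ b _ h p =>
    have hb : b = w := hu _ h
    have hlen : 3 ≤ p.length + 1 := by simpa using hc.three_le_length
    have hdn : p.darts ≠ [] := by
      intro h0
      have := p.length_darts
      rw [h0] at this
      simp at this
      omega
    set d := p.darts.getLast hdn with hd_def
    have hd : d ∈ p.darts := List.getLast_mem hdn
    have hsnd : d.snd = u := by rw [hd_def, SimpleGraph.Walk.getLast_darts_eq_lastDart hdn]; rfl
    have hadj : G.Adj u d.fst := (hsnd ▸ d.adj).symm
    have hfst : d.fst = w := hu _ hadj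
    have hedge : d.edge ∈ p.edges := List.mem_map_of_mem hd
    have hnodup := hc.isCircuit.isTrail.edges_nodup
    rw [SimpleGraph.Walk.edges_cons] at hnodup
    have hnot : s(u, b) ∉ p.edges := (List.nodup_cons.mp hnodup).1
    apply hnot
    have : d.edge = s(d.fst, d.snd) := rfl
    rw [this, hfst, hsnd, Sym2.eq_swap] at hedge
    subst hb
    exact hedge

private lemma aux_not_mem_support {V : Type*} [DecidableEq V] {G : SimpleGraph V} {u w : V}
    (hu : ∀ a, G.Adj u a → a = w) {x : V} {c : G.Walk x x} (hc : c.IsCycle) :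
    u ∉ c.support := fun hmem => aux_no_cycle_at hu _ (hc.rotate hmem)

open SimpleGraph in

private lemma aux_tree {V : Type*} (H1 : SimpleGraph V) (σ : V ≃ V)
    (hinv : ∀ a, σ (σ a) = a)
    (v v1 : V) (hvs : v ≠ σ v) (h1v : v1 ≠ v) (h1sv : v1 ≠ σ v)
    (hH1v : ∀ a, ¬ H1.Adj v a) (hH1sv : ∀ a, ¬ H1.Adj (σ v) a)
    (hH1 : H1.IsAcyclic)
    (hH1conn : ∀ x y : V, x ≠ v → x ≠ σ v → y ≠ v → y ≠ σ v → H1.Reachable x y) :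
    (H1 ⊔ SimpleGraph.fromEdgeSet {s(v, v1), s(σ v, σ v1)}).IsTree := by
  classical
  set G1 := H1 ⊔ SimpleGraph.fromEdgeSet {s(v, v1), s(σ v, σ v1)} with hG1
  have hs1v : σ v1 ≠ v := by
    intro h; apply h1sv; rw [← h, hinv]
  have hs1sv : σ v1 ≠ σ v := fun h => h1v (σ.injective h)
  have hadjv : G1.Adj v v1 := by
    rw [hG1]
    exact Or.inr ⟨Or.inl rfl, fun h => h1v h.symm⟩
  have hadjsv : G1.Adj (σ v) (σ v1) := by
    rw [hG1]
    exact Or.inr ⟨Or.inr rfl, fun h => hs1sv h.symm⟩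
  have hu_v : ∀ a, G1.Adj v a → a = v1 := by
    intro a ha
    rcases ha with h | ⟨h, hne⟩
    · exact absurd h (hH1v a)
    · rcases h with h | h
      · rw [Sym2.eq_iff] at h
        rcases h with ⟨-, h⟩ | ⟨h1, -⟩
        · exact h
        · exact absurd h1.symm h1v
      · simp only [Set.mem_singleton_iff, Sym2.eq_iff] at h
        rcases h with ⟨h1, -⟩ | ⟨h1, -⟩
        · exact absurd h1 hvs
        · exact absurd h1.symm hs1v
  have hu_sv : ∀ a, G1.Adj (σ v) a → a = σ v1 := by
    intro a ha
    rcases ha with h | ⟨h, hne⟩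
    · exact absurd h (hH1sv a)
    · rcases h with h | h
      · rw [Sym2.eq_iff] at h
        rcases h with ⟨h1, -⟩ | ⟨h1, -⟩
        · exact absurd h1.symm hvs
        · exact absurd h1.symm h1sv
      · simp only [Set.mem_singleton_iff, Sym2.eq_iff] at h
        rcases h with ⟨-, h⟩ | ⟨h1, -⟩
        · exact h
        · exact absurd h1.symm hs1sv
  have hle : H1 ≤ G1 := le_sup_left
  constructor
  · -- Connected
    have hreach : ∀ x : V, G1.Reachable x v1 := by
      intro x
      by_cases hx : x = v
      · subst hx; exact hadjv.reachable
      · by_cases hsx : x = σ v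
        · subst hsx
          exact hadjsv.reachable.trans
            ((hH1conn (σ v1) v1 hs1v hs1sv h1v h1sv).mono hle)
        · exact (hH1conn x v1 hx hsx h1v h1sv).mono hle
    exact (SimpleGraph.connected_iff _).mpr ⟨fun x y => (hreach x).trans (hreach y).symm, ⟨v⟩⟩
  · -- Acyclic
    intro x c hc
    have hv := aux_not_mem_support hu_v hc
    have hsv := aux_not_mem_support hu_sv hc
    have hq : ∀ e ∈ c.edges, e ∈ H1.edgeSet := by
      intro e he
      induction e with
      | h a b =>
        have hadj : G1.Adj a b := c.adj_of_mem_edges he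
        have has : a ∈ c.support := c.fst_mem_support_of_mem_edges he
        have hbs : b ∈ c.support := c.snd_mem_support_of_mem_edges he
        have hav : a ≠ v := fun h => hv (h ▸ has)
        have hasv : a ≠ σ v := fun h => hsv (h ▸ has)
        have hbv : b ≠ v := fun h => hv (h ▸ hbs)
        have hbsv : b ≠ σ v := fun h => hsv (h ▸ hbs)
        rcases hadj with h | ⟨h, -⟩
        · exact h
        · exfalso
          rcases h with h | h
          · rw [Sym2.eq_iff] at h
            rcases h with ⟨h1, -⟩ | ⟨-, h2⟩
            · exact hav h1
            · exact hbv h2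
          · simp only [Set.mem_singleton_iff, Sym2.eq_iff] at h
            rcases h with ⟨h1, -⟩ | ⟨-, h2⟩
            · exact hasv h1
            · exact hbsv h2
    exact hH1 _ (hc.transfer hq)

/-- A (Z2,θ) 0-extension of an admissible graph is admissible: adding a
symmetric pair of new degree-2 vertices `v, σ v` joined to `v1, v2` and
`σ v1, σ v2` preserves the edge-disjoint decomposition into two invariant
spanning trees with no fixed edge. Here the vertex type `V` consists of the
vertices of `H` together with `v` and `σ v`, which are isolated in `H`. -/
theorem stmt_10 {V : Type*} [Fintype V] (H G : SimpleGraph V) (σ : V ≃ V)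
    (hinv : ∀ a, σ (σ a) = a)
    (hautH : ∀ a b, H.Adj a b ↔ H.Adj (σ a) (σ b))
    (v v1 v2 : V)
    (hvs : v ≠ σ v) (h12 : v1 ≠ v2)
    (h1v : v1 ≠ v) (h1sv : v1 ≠ σ v) (h2v : v2 ≠ v) (h2sv : v2 ≠ σ v)
    (hHv : ∀ a, ¬ H.Adj v a) (hHsv : ∀ a, ¬ H.Adj (σ v) a)
    (H1 H2 : SimpleGraph V)
    (hsupH : H1 ⊔ H2 = H)
    (hdisjH : Disjoint H1.edgeSet H2.edgeSet)
    (hH1 : H1.IsAcyclic) (hH2 : H2.IsAcyclic)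
    (hH1conn : ∀ x y : V, x ≠ v → x ≠ σ v → y ≠ v → y ≠ σ v → H1.Reachable x y)
    (hH2conn : ∀ x y : V, x ≠ v → x ≠ σ v → y ≠ v → y ≠ σ v → H2.Reachable x y)
    (hH1inv : ∀ a b, H1.Adj a b → H1.Adj (σ a) (σ b))
    (hH2inv : ∀ a b, H2.Adj a b → H2.Adj (σ a) (σ b))
    (hnofixH : ∀ a b, H.Adj a b → ¬ ((σ a = a ∧ σ b = b) ∨ (σ a = b ∧ σ b = a)))
    (hG : G = H ⊔ SimpleGraph.fromEdgeSet
      {s(v, v1), s(v, v2), s(σ v, σ v1), s(σ v, σ v2)}) :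
    ∃ G1 G2 : SimpleGraph V,
      G1 ⊔ G2 = G ∧
      Disjoint G1.edgeSet G2.edgeSet ∧
      G1.IsTree ∧ G2.IsTree ∧
      (∀ a b, G1.Adj a b → G1.Adj (σ a) (σ b)) ∧
      (∀ a b, G2.Adj a b → G2.Adj (σ a) (σ b)) ∧
      (∀ a b, G.Adj a b → ¬ ((σ a = a ∧ σ b = b) ∨ (σ a = b ∧ σ b = a))) := by
  classical
  have hswap : ∀ x y : V, σ x = y → x = σ y := fun x y h => by rw [← h, hinv]
  have hle1 : H1 ≤ H := hsupH ▸ le_sup_left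
  have hle2 : H2 ≤ H := hsupH ▸ le_sup_right
  have hH1v : ∀ a, ¬ H1.Adj v a := fun a h => hHv a (hle1 h)
  have hH1sv : ∀ a, ¬ H1.Adj (σ v) a := fun a h => hHsv a (hle1 h)
  have hH2v : ∀ a, ¬ H2.Adj v a := fun a h => hHv a (hle2 h)
  have hH2sv : ∀ a, ¬ H2.Adj (σ v) a := fun a h => hHsv a (hle2 h)
  refine ⟨H1 ⊔ SimpleGraph.fromEdgeSet {s(v, v1), s(σ v, σ v1)},
          H2 ⊔ SimpleGraph.fromEdgeSet {s(v, v2), s(σ v, σ v2)},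
          ?_, ?_,
          aux_tree H1 σ hinv v v1 hvs h1v h1sv hH1v hH1sv hH1 hH1conn,
          aux_tree H2 σ hinv v v2 hvs h2v h2sv hH2v hH2sv hH2 hH2conn,
          ?_, ?_, ?_⟩
  · -- sup equality
    ext a b
    rw [hG, ← hsupH]
    simp only [SimpleGraph.sup_adj, SimpleGraph.fromEdgeSet_adj, Set.mem_insert_iff,
      Set.mem_singleton_iff]
    tauto
  · -- disjointness
    rw [Set.disjoint_left]
    intro e he1 he2
    induction e with
    | h a b =>
      rw [SimpleGraph.mem_edgeSet] at he1 he2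
      simp only [SimpleGraph.sup_adj, SimpleGraph.fromEdgeSet_adj, Set.mem_insert_iff,
        Set.mem_singleton_iff, Sym2.eq_iff] at he1 he2
      rcases he1 with h1 | ⟨h1, -⟩ <;> rcases he2 with h2 | ⟨h2, -⟩
      · exact Set.disjoint_left.mp hdisjH ((SimpleGraph.mem_edgeSet H1).mpr h1)
          ((SimpleGraph.mem_edgeSet H2).mpr h2)
      · rcases h2 with (⟨rfl, rfl⟩ | ⟨rfl, rfl⟩) | (⟨rfl, rfl⟩ | ⟨rfl, rfl⟩) <;>
          first
            | exact hH1v _ h1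
            | exact hH1v _ h1.symm
            | exact hH1sv _ h1
            | exact hH1sv _ h1.symm
      · rcases h1 with (⟨rfl, rfl⟩ | ⟨rfl, rfl⟩) | (⟨rfl, rfl⟩ | ⟨rfl, rfl⟩) <;>
          first
            | exact hH2v _ h2
            | exact hH2v _ h2.symm
            | exact hH2sv _ h2
            | exact hH2sv _ h2.symm
      · rcases h1 with (⟨rfl, rfl⟩ | ⟨rfl, rfl⟩) | (⟨rfl, rfl⟩ | ⟨rfl, rfl⟩) <;>
          rcases h2 with (⟨e1, e2⟩ | ⟨e1, e2⟩) | (⟨e1, e2⟩ | ⟨e1, e2⟩) <;>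
          first
            | exact h12 e2
            | exact h12 e1
            | exact h12 e1.symm
            | exact h12 e2.symm
            | exact hvs e1
            | exact hvs e1.symm
            | exact hvs e2
            | exact hvs e2.symm
            | exact h1v e1
            | exact h1v e1.symm
            | exact h1v e2
            | exact h1v e2.symm
            | exact h2v e1
            | exact h2v e1.symm
            | exact h2v e2
            | exact h2v e2.symm
            | exact h1sv e1
            | exact h1sv e1.symm
            | exact h1sv e2
            | exact h1sv e2.symm
            | exact h2sv e1
            | exact h2sv e1.symm
            | exact h2sv e2
            | exact h2sv e2.symm
            | exact h1sv (hswap _ _ e1)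
            | exact h1sv (hswap _ _ e1.symm)
            | exact h1sv (hswap _ _ e2)
            | exact h1sv (hswap _ _ e2.symm)
            | exact h2sv (hswap _ _ e1)
            | exact h2sv (hswap _ _ e1.symm)
            | exact h2sv (hswap _ _ e2)
            | exact h2sv (hswap _ _ e2.symm)
            | exact h12 (σ.injective e1)
            | exact h12 (σ.injective e2)
            | exact h12 (σ.injective e1.symm)
            | exact h12 (σ.injective e2.symm)
            | exact h1v (σ.injective e1)
            | exact h1v (σ.injective e2)
            | exact h2v (σ.injective e1)
            | exact h2v (σ.injective e2)
            | exact hvs (σ.injective e1)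
            | exact hvs (σ.injective e2)
            | exact hvs (σ.injective e1.symm)
            | exact hvs (σ.injective e2.symm)
  · -- invariance of G1
    intro a b hab
    simp only [SimpleGraph.sup_adj, SimpleGraph.fromEdgeSet_adj, Set.mem_insert_iff,
      Set.mem_singleton_iff, Sym2.eq_iff] at hab ⊢
    rcases hab with h | ⟨h, hne⟩
    · exact Or.inl (hH1inv a b h)
    · refine Or.inr ⟨?_, fun he => hne (σ.injective he)⟩
      rcases h with (⟨rfl, rfl⟩ | ⟨rfl, rfl⟩) | (⟨rfl, rfl⟩ | ⟨rfl, rfl⟩) <;> simp [hinv]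
  · -- invariance of G2
    intro a b hab
    simp only [SimpleGraph.sup_adj, SimpleGraph.fromEdgeSet_adj, Set.mem_insert_iff,
      Set.mem_singleton_iff, Sym2.eq_iff] at hab ⊢
    rcases hab with h | ⟨h, hne⟩
    · exact Or.inl (hH2inv a b h)
    · refine Or.inr ⟨?_, fun he => hne (σ.injective he)⟩
      rcases h with (⟨rfl, rfl⟩ | ⟨rfl, rfl⟩) | (⟨rfl, rfl⟩ | ⟨rfl, rfl⟩) <;> simp [hinv]
  · -- no fixed edge in G
    intro a b hab hfix
    rw [hG] at hab
    simp only [SimpleGraph.sup_adj, SimpleGraph.fromEdgeSet_adj, Set.mem_insert_iff,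
      Set.mem_singleton_iff, Sym2.eq_iff] at hab
    rcases hab with h | ⟨h, -⟩
    · exact hnofixH a b h hfix
    · rcases h with (⟨rfl, rfl⟩ | ⟨rfl, rfl⟩) | (⟨rfl, rfl⟩ | ⟨rfl, rfl⟩) |
        (⟨rfl, rfl⟩ | ⟨rfl, rfl⟩) | (⟨rfl, rfl⟩ | ⟨rfl, rfl⟩) <;>
        rcases hfix with ⟨f1, f2⟩ | ⟨f1, f2⟩ <;> (try simp only [hinv] at f1 f2) <;>
        try (first
          | exact hvs f1.symm
          | exact hvs f2.symm
          | exact hvs f1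
          | exact hvs f2
          | exact h1sv f1.symm
          | exact h1sv f2.symm
          | exact h2sv f1.symm
          | exact h2sv f2.symm
          | exact h1sv (hswap _ _ f1)
          | exact h1sv (hswap _ _ f2)
          | exact h2sv (hswap _ _ f1)
          | exact h2sv (hswap _ _ f2)
          | exact h1sv (hswap _ _ f1.symm)
          | exact h1sv (hswap _ _ f2.symm)
          | exact h2sv (hswap _ _ f1.symm)
          | exact h2sv (hswap _ _ f2.symm)
          | exact h1sv (hswap _ _ f1).symm
          | exact h2sv (hswap _ _ f1).symm)
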